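/- Let Y be a square matrix over ℤ satisfying (Y - I)^3 = 0 and Y ≡ I (mod 2). Then for every odd integer m ≥ 1, Y^m ≡ I (mod 2m). -/
import Mathlib


/-- Let `Y` be a square integer matrix with `(Y - I)^3 = 0` and `Y ≡ I (mod 2)`
(entrywise). Then for every odd integer `m ≥ 1`, `Y^m ≡ I (mod 2m)` entrywise. -/
theorem pow_congr_one_mod_two_mul_of_odd {n : ℕ} (Y : Matrix (Fin n) (Fin n) ℤ)
    (hcube : (Y - 1) ^ 3 = 0) (hmod2 : ∀ i j, (2 : ℤ) ∣ (Y - 1) i j)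
    (m : ℕ) (hm : 1 ≤ m) (hodd : Odd m) :
    ∀ i j, ((2 * m : ℕ) : ℤ) ∣ (Y ^ m - 1) i j := by
  intro i j
  set N : Matrix (Fin n) (Fin n) ℤ := Y - 1 with hN
  have hY : Y = 1 + N := by rw [hN]; abel
  have hN2N : N ^ 2 * N = 0 := by rw [← pow_succ]; exact hcube
  have key : ∀ k : ℕ, Y ^ k = 1 + (k : ℤ) • N + ((k.choose 2 : ℤ)) • N ^ 2 := by
    intro k
    induction k with
    | zero => simp
    | succ k ih =>
      rw [pow_succ, ih, hY]
      have hch : ((k+1).choose 2 : ℤ) = (k.choose 2 : ℤ) + k := by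
        have : (k+1).choose 2 = k.choose 1 + k.choose 2 := Nat.choose_succ_succ k 1
        rw [this]; push_cast [Nat.choose_one_right]; ring
      rw [hch]
      simp only [mul_add, add_mul, one_mul, mul_one, smul_mul_assoc, mul_smul_comm,
        ← pow_succ, ← pow_two]
      rw [show N ^ 3 = 0 from hcube]
      push_cast
      module
  obtain ⟨t, ht⟩ := hodd
  have hch2 : (m.choose 2 : ℤ) = (m : ℤ) * t := by
    have hm1 : m - 1 = 2 * t := by omega
    rw [Nat.choose_two_right, hm1, show m * (2 * t) = 2 * (m * t) by ring,
      Nat.mul_div_cancel_left _ two_pos]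
    push_cast; ring
  obtain ⟨a, ha⟩ := hmod2 i j
  have h4 : (4 : ℤ) ∣ (N ^ 2) i j := by
    have : (N ^ 2) i j = ∑ l, N i l * N l j := by
      rw [pow_two]; rfl
    rw [this]
    apply Finset.dvd_sum
    intro l _
    obtain ⟨c, hc⟩ := hmod2 i l
    obtain ⟨d, hd⟩ := hmod2 l j
    exact ⟨c * d, by rw [hc, hd]; ring⟩
  obtain ⟨b, hb⟩ := h4
  have : (Y ^ m - 1) i j = (m : ℤ) * N i j + (m.choose 2 : ℤ) * (N ^ 2) i j := by
    rw [key m]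
    simp only [Matrix.add_apply, Matrix.smul_apply, Matrix.sub_apply, Matrix.one_apply_eq,
      smul_eq_mul]
    ring
  rw [this, ha, hb, hch2]
  exact ⟨a + 2 * t * b, by push_cast; ring⟩
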